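/- For any masses m_1, …, m_N > 0 and any vectors r_1, …, r_N, v_1, …, v_N ∈ ℝ³, one has ‖Σ_j m_j (r_j × v_j)‖² ≤ 4 I T, where I = (1/2) Σ_j m_j ‖r_j‖², T = (1/2) Σ_j m_j ‖v_j‖², and × is the cross product in ℝ³. -/

import Mathlib

open Matrix


/-- The cross product on `ℝ³`, viewed as `EuclideanSpace ℝ (Fin 3)`. -/
noncomputable def cross (u v : EuclideanSpace ℝ (Fin 3)) : EuclideanSpace ℝ (Fin 3) :=
  (WithLp.equiv 2 (Fin 3 → ℝ)).symm
    (crossProduct ((WithLp.equiv 2 (Fin 3 → ℝ)) u) ((WithLp.equiv 2 (Fin 3 → ℝ)) v))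

lemma norm_sq_eucl (x : EuclideanSpace ℝ (Fin 3)) :
    ‖x‖ ^ 2 = (WithLp.equiv 2 (Fin 3 → ℝ) x) ⬝ᵥ (WithLp.equiv 2 (Fin 3 → ℝ) x) := by
  rw [← real_inner_self_eq_norm_sq]
  simp [dotProduct, PiLp.inner_apply, RCLike.inner_apply, mul_comm]
  rw [EuclideanSpace.norm_sq_eq]; simp [Real.norm_eq_abs, sq_abs, pow_two]

lemma norm_cross_le (u v : EuclideanSpace ℝ (Fin 3)) : ‖cross u v‖ ≤ ‖u‖ * ‖v‖ := by
  have h := sq_nonneg ((WithLp.equiv 2 (Fin 3 → ℝ) u) ⬝ᵥ (WithLp.equiv 2 (Fin 3 → ℝ) v))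
  have key : ‖cross u v‖ ^ 2 ≤ (‖u‖ * ‖v‖) ^ 2 := by
    rw [mul_pow, norm_sq_eucl, norm_sq_eucl, norm_sq_eucl, cross,
      Equiv.apply_symm_apply, cross_dot_cross,
      dotProduct_comm ((WithLp.equiv 2 (Fin 3 → ℝ)) v) ((WithLp.equiv 2 (Fin 3 → ℝ)) u)]
    nlinarith [h]
  exact (pow_le_pow_iff_left₀ (norm_nonneg _)
    (mul_nonneg (norm_nonneg _) (norm_nonneg _)) two_ne_zero).mp key

/-- **Sundman's pointwise inequality.** For any masses, positions and
velocities, `‖∑ j, m j • (r j × v j)‖² ≤ 4 I T`, where `I` is the moment of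
inertia and `T` the kinetic energy. -/
theorem sundman_pointwise_inequality (N : ℕ) (m : Fin N → ℝ) (hm : ∀ j, 0 < m j)
    (r v : Fin N → EuclideanSpace ℝ (Fin 3)) :
    ‖∑ j, m j • cross (r j) (v j)‖ ^ 2
      ≤ 4 * ((1 / 2) * ∑ j, m j * ‖r j‖ ^ 2) * ((1 / 2) * ∑ j, m j * ‖v j‖ ^ 2) := by
  have h1 : ‖∑ j, m j • cross (r j) (v j)‖
      ≤ ∑ j, (Real.sqrt (m j) * ‖r j‖) * (Real.sqrt (m j) * ‖v j‖) := by
    refine (norm_sum_le _ _).trans (Finset.sum_le_sum fun j _ => ?_)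
    rw [norm_smul, Real.norm_eq_abs, abs_of_pos (hm j)]
    have : m j * (‖r j‖ * ‖v j‖) = (Real.sqrt (m j) * ‖r j‖) * (Real.sqrt (m j) * ‖v j‖) := by
      rw [show Real.sqrt (m j) * ‖r j‖ * (Real.sqrt (m j) * ‖v j‖)
        = (Real.sqrt (m j) * Real.sqrt (m j)) * (‖r j‖ * ‖v j‖) by ring,
        Real.mul_self_sqrt (hm j).le]
    rw [← this] at *
    exact mul_le_mul_of_nonneg_left (norm_cross_le _ _) (hm j).le
  have h2 : (∑ j, (Real.sqrt (m j) * ‖r j‖) * (Real.sqrt (m j) * ‖v j‖)) ^ 2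
      ≤ (∑ j, (Real.sqrt (m j) * ‖r j‖) ^ 2) * (∑ j, (Real.sqrt (m j) * ‖v j‖) ^ 2) :=
    Finset.sum_mul_sq_le_sq_mul_sq _ _ _
  have hs : ∀ (w : Fin N → EuclideanSpace ℝ (Fin 3)) j,
      (Real.sqrt (m j) * ‖w j‖) ^ 2 = m j * ‖w j‖ ^ 2 := fun w j => by
    rw [mul_pow, Real.sq_sqrt (hm j).le]
  have h3 : ‖∑ j, m j • cross (r j) (v j)‖ ^ 2
      ≤ (∑ j, (Real.sqrt (m j) * ‖r j‖) * (Real.sqrt (m j) * ‖v j‖)) ^ 2 :=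
    pow_le_pow_left₀ (norm_nonneg _) h1 2
  calc ‖∑ j, m j • cross (r j) (v j)‖ ^ 2
      ≤ (∑ j, (Real.sqrt (m j) * ‖r j‖) ^ 2) * (∑ j, (Real.sqrt (m j) * ‖v j‖) ^ 2) :=
        h3.trans h2
    _ = (∑ j, m j * ‖r j‖ ^ 2) * (∑ j, m j * ‖v j‖ ^ 2) := by
        simp_rw [hs]
    _ = 4 * ((1 / 2) * ∑ j, m j * ‖r j‖ ^ 2) * ((1 / 2) * ∑ j, m j * ‖v j‖ ^ 2) := by ring
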